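/- Let (Ω, 𝔽, P) be a probability space and let z : ℝ^p × Ω → ℝ^d be such that for each ω the map φ ↦ z(φ, ω) is differentiable, z(φ, ·) and its derivative D_φ z(φ, ·) are Bochner integrable for each φ, and differentiation under the integral sign is valid both for φ ↦ E[z(φ, ·)] and for φ ↦ E[‖z(φ, ·) − c‖²] (uniformly dominated derivatives in a neighborhood of φ₀). Let m(φ) = E[z(φ, ·)] and R(φ) = (1/d) E[‖z(φ, ·) − m(φ)‖²]. Then R is differentiable at φ₀ and ∇_φ R(φ₀)[h] = (2/d) E[⟨D_φ z(φ₀, ·)[h], z(φ₀, ·) − m(φ₀)⟩] for every h ∈ ℝ^p; i.e., the gradient of the expected intra-class variance equals the expectation of the per-sample gradient computed with the mean m held fixed, because the cross term involving ∇_φ m(φ₀) vanishes since E[z(φ₀, ·) − m(φ₀)] = 0. -/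

import Mathlib

open MeasureTheory Asymptotics
open scoped RealInnerProductSpace Topology

/-- Population version: let `(Ω, P)` be a probability space and
`z : ℝ^p × Ω → ℝ^d` with `φ ↦ z φ ω` differentiable at `φ₀` for each `ω`,
`z φ` and `ω ↦ Dz ω h` Bochner integrable, and assume differentiation under the
integral sign is valid both for the mean `m φ = E[z φ]` and for
`φ ↦ E[‖z φ - c‖²]` (for every constant `c`).  Then with
`R φ = (1/d) E[‖z φ - m φ‖²]`, `R` is differentiable at `φ₀` and
`∇R(φ₀)[h] = (2/d) E[⟪D_φ z(φ₀,·)[h], z(φ₀,·) - m(φ₀)⟫]`. -/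
theorem population_variance_fderiv_mean_as_constant
    {p d : ℕ} {Ω : Type*} [MeasurableSpace Ω]
    (P : Measure Ω) [IsProbabilityMeasure P]
    (z : EuclideanSpace ℝ (Fin p) → Ω → EuclideanSpace ℝ (Fin d))
    (Dz : Ω → (EuclideanSpace ℝ (Fin p) →L[ℝ] EuclideanSpace ℝ (Fin d)))
    (φ₀ : EuclideanSpace ℝ (Fin p))
    (hz : ∀ ω, HasFDerivAt (fun φ => z φ ω) (Dz ω) φ₀)
    (hzint : ∀ φ, Integrable (z φ) P)
    (hDzint : ∀ h, Integrable (fun ω => Dz ω h) P)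
    (m : EuclideanSpace ℝ (Fin p) → EuclideanSpace ℝ (Fin d))
    (hm : ∀ φ, m φ = ∫ ω, z φ ω ∂P)
    (m' : EuclideanSpace ℝ (Fin p) →L[ℝ] EuclideanSpace ℝ (Fin d))
    (hm'deriv : HasFDerivAt m m' φ₀)
    (hm'eq : ∀ h, m' h = ∫ ω, Dz ω h ∂P)
    (G : EuclideanSpace ℝ (Fin d) → (EuclideanSpace ℝ (Fin p) →L[ℝ] ℝ))
    (hGderiv : ∀ c, HasFDerivAt (fun φ => ∫ ω, ‖z φ ω - c‖ ^ 2 ∂P) (G c) φ₀)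
    (hGeq : ∀ c h, G c h = ∫ ω, 2 * ⟪Dz ω h, z φ₀ ω - c⟫ ∂P)
    (R : EuclideanSpace ℝ (Fin p) → ℝ)
    (hR : ∀ φ, R φ = (1 / (d : ℝ)) * ∫ ω, ‖z φ ω - m φ‖ ^ 2 ∂P) :
    ∃ R' : EuclideanSpace ℝ (Fin p) →L[ℝ] ℝ, HasFDerivAt R R' φ₀ ∧
      ∀ h, R' h = (2 / (d : ℝ)) * ∫ ω, ⟪Dz ω h, z φ₀ ω - m φ₀⟫ ∂P := by
  set c₀ := m φ₀ with hc₀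
  set F : EuclideanSpace ℝ (Fin p) → ℝ := fun φ => ∫ ω, ‖z φ ω - c₀‖ ^ 2 ∂P with hF
  set err : EuclideanSpace ℝ (Fin p) → ℝ := fun φ => R φ - (1 / (d : ℝ)) * F φ with herr
  -- the key bound on the error term
  have hbound : ∀ φ, |err φ| ≤ (1 / (d : ℝ)) * ‖m φ - c₀‖ ^ 2 := by
    intro φ
    set c := m φ - c₀ with hc
    -- pointwise expansion
    have hpt : ∀ ω, ‖z φ ω - m φ‖ ^ 2
        = ‖z φ ω - c₀‖ ^ 2 + (‖c‖ ^ 2 - 2 * ⟪z φ ω - c₀, c⟫) := by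
      intro ω
      have h1 : z φ ω - m φ = (z φ ω - c₀) - c := by rw [hc]; abel
      rw [h1, norm_sub_sq_real]; ring
    have hzc : Integrable (fun ω => z φ ω - c₀) P := (hzint φ).sub (integrable_const c₀)
    have heint : Integrable (fun ω => ‖c‖ ^ 2 - 2 * ⟪z φ ω - c₀, c⟫) P :=
      (integrable_const _).sub ((hzc.inner_const c).const_mul 2)
    have h2 : ∫ ω, ⟪z φ ω - c₀, c⟫ ∂P = ‖c‖ ^ 2 := by
      have hcomm : ∀ ω, ⟪z φ ω - c₀, c⟫ = ⟪c, z φ ω - c₀⟫ := fun ω => real_inner_comm _ _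
      simp_rw [hcomm]
      rw [integral_inner hzc c]
      have : ∫ ω, (z φ ω - c₀) ∂P = c := by
        rw [integral_sub (hzint φ) (integrable_const c₀), integral_const]
        simp [hc, hm φ]
      rw [this, real_inner_self_eq_norm_sq]
    have hinte : ∫ ω, (‖c‖ ^ 2 - 2 * ⟪z φ ω - c₀, c⟫) ∂P = -‖c‖ ^ 2 := by
      rw [integral_sub (integrable_const _) ((hzc.inner_const c).const_mul 2),
        integral_const_mul, h2, integral_const]
      simp
      ring
    by_cases hint : Integrable (fun ω => ‖z φ ω - c₀‖ ^ 2) P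
    · have key : ∫ ω, ‖z φ ω - m φ‖ ^ 2 ∂P = F φ + -‖c‖ ^ 2 := by
        calc ∫ ω, ‖z φ ω - m φ‖ ^ 2 ∂P
            = ∫ ω, (‖z φ ω - c₀‖ ^ 2 + (‖c‖ ^ 2 - 2 * ⟪z φ ω - c₀, c⟫)) ∂P :=
              integral_congr_ae (Filter.Eventually.of_forall hpt)
          _ = F φ + -‖c‖ ^ 2 := by rw [integral_add hint heint, hinte, hF]
      have heq : err φ = -((1 / (d : ℝ)) * ‖c‖ ^ 2) := by
        show R φ - (1 / (d : ℝ)) * F φ = _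
        rw [hR, key]; ring
      rw [heq, abs_neg, abs_of_nonneg (by positivity)]
    · have hnot : ¬ Integrable (fun ω => ‖z φ ω - m φ‖ ^ 2) P := by
        intro hI
        refine hint ((hI.sub heint).congr (Filter.Eventually.of_forall fun ω => ?_))
        simp only [Pi.sub_apply]
        rw [hpt ω]; ring
      have h1 : F φ = 0 := integral_undef hint
      have h2' : ∫ ω, ‖z φ ω - m φ‖ ^ 2 ∂P = 0 := integral_undef hnot
      have heq : err φ = 0 := by
        show R φ - (1 / (d : ℝ)) * F φ = 0
        rw [hR, h1, h2']; ring
      rw [heq, abs_zero]; positivity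
  -- err is little-o of (φ - φ₀)
  have hmO : (fun φ => m φ - c₀) =O[𝓝 φ₀] (fun φ => φ - φ₀) := hm'deriv.isBigO_sub
  have herrO : err =O[𝓝 φ₀] (fun φ => ‖m φ - c₀‖ * ‖m φ - c₀‖) := by
    refine IsBigO.of_bound (1 / (d : ℝ)) (Filter.Eventually.of_forall fun φ => ?_)
    rw [Real.norm_eq_abs]
    calc |err φ| ≤ (1 / (d : ℝ)) * ‖m φ - c₀‖ ^ 2 := hbound φ
      _ = (1 / (d : ℝ)) * ‖‖m φ - c₀‖ * ‖m φ - c₀‖‖ := by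
          rw [Real.norm_eq_abs, abs_of_nonneg (by positivity)]; ring
  have hlittle : err =o[𝓝 φ₀] (fun φ => φ - φ₀) := by
    have h1 : (fun φ => ‖m φ - c₀‖) =o[𝓝 φ₀] (fun _ : EuclideanSpace ℝ (Fin p) => (1 : ℝ)) := by
      rw [isLittleO_one_iff]
      have ht : Filter.Tendsto (fun φ => m φ - c₀) (𝓝 φ₀) (𝓝 (m φ₀ - c₀)) :=
        (hm'deriv.continuousAt.tendsto).sub tendsto_const_nhds
      have ht0 : Filter.Tendsto (fun φ => m φ - c₀) (𝓝 φ₀) (𝓝 0) := by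
        simpa [hc₀] using ht
      simpa using ht0.norm
    have h3 : (fun φ => ‖m φ - c₀‖ * ‖m φ - c₀‖) =o[𝓝 φ₀]
        (fun φ => (1 : ℝ) * ‖φ - φ₀‖) := h1.mul_isBigO hmO.norm_norm
    refine herrO.trans_isLittleO ?_
    simpa [isLittleO_norm_right] using h3
  have herr0 : err φ₀ = 0 := by
    show R φ₀ - (1 / (d : ℝ)) * F φ₀ = 0
    rw [hR, hF, ← hc₀]; ring
  have herrderiv : HasFDerivAt err (0 : EuclideanSpace ℝ (Fin p) →L[ℝ] ℝ) φ₀ :=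
    HasFDerivAtFilter.of_isLittleO (by simpa [herr0, Function.comp_def] using hlittle)
  have hFderiv : HasFDerivAt (fun φ => (1 / (d : ℝ)) * F φ)
      ((1 / (d : ℝ)) • G c₀) φ₀ := (hGderiv c₀).const_mul _
  have hRderiv : HasFDerivAt R ((1 / (d : ℝ)) • G c₀ + 0) φ₀ := by
    have hsplit : R = fun φ => (1 / (d : ℝ)) * F φ + err φ := by
      funext φ; simp [herr]
    rw [hsplit]
    exact hFderiv.add herrderiv
  refine ⟨(1 / (d : ℝ)) • G c₀ + 0, hRderiv, fun h => ?_⟩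
  simp only [ContinuousLinearMap.add_apply, ContinuousLinearMap.zero_apply, add_zero,
    ContinuousLinearMap.smul_apply, smul_eq_mul]
  rw [hGeq, integral_const_mul]
  ring
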